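/- Consider the stochastic Banach–Picard iteration x_i^{ℓ+1} = (1 − u_i^ℓ) x_i^ℓ + u_i^ℓ T_i x^ℓ + u_i^ℓ e_i^ℓ under the stated stochastic framework, where T : D → D is α-quasi-averaged on a non-empty bounded closed convex set D = D₁ ⊕ ⋯ ⊕ D_n, x* is a fixed point of T, the iterates satisfy x^ℓ ∈ D almost surely for all ℓ, and E[‖e_i^ℓ‖_i²] < ∞ with sup_ℓ (E[‖e_i^ℓ‖_i²] + 2 diam(D_i) μ_i^ℓ) < ∞. Then for each coordinate i = 1, …, n and every ℓ ∈ ℕ: E[ (1/(ℓ+1)) ∑_{h=0}^{ℓ} u_i^h ‖x_i^h − T_i x^h‖_i² ] ≤ (α/(1−α)) ( (1/(ℓ+1)) ‖x_i⁰ − x_i*‖_i² + p_i sup_ℓ ( E[‖e_i^ℓ‖_i²] + 2 diam(D_i) μ_i^ℓ ) ). -/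

import Mathlib

open MeasureTheory ProbabilityTheory Real

/-- **Stochastic Banach–Picard iteration, quasi-averaged case: mean cumulative
fixed-point residual.**
For the iteration `x_i^{ℓ+1} = (1 − u_i^ℓ) x_i^ℓ + u_i^ℓ T_i x^ℓ + u_i^ℓ e_i^ℓ` with `T : D → D`
α-quasi-averaged on the non-empty bounded closed convex set `D = D₁ ⊕ ⋯ ⊕ D_n`, fixed point
`x*`, iterates staying in `D` a.s., for every coordinate `i` and every `ℓ`:
`E[(1/(ℓ+1)) ∑_{h≤ℓ} u_i^h ‖x_i^h − T_i x^h‖²]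
  ≤ (α/(1−α)) ( (1/(ℓ+1)) ‖x_i⁰ − x_i*‖² + p_i sup_ℓ (E[‖e_i^ℓ‖²] + 2 diam(D_i) μ_i^ℓ) )`. -/
theorem stochastic_banach_picard_averaged_mean
    {Ω : Type*} [MeasurableSpace Ω] (μ : Measure Ω) [IsProbabilityMeasure μ]
    {n : ℕ} (H : Fin n → Type*)
    [∀ i, NormedAddCommGroup (H i)] [∀ i, InnerProductSpace ℝ (H i)]
    [∀ i, CompleteSpace (H i)] [∀ i, MeasurableSpace (H i)] [∀ i, BorelSpace (H i)]
    -- the domain: D = D₁ ⊕ ⋯ ⊕ D_n non-empty, bounded, closed, convex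
    (D : ∀ i, Set (H i))
    (hDne : ∀ i, (D i).Nonempty) (hDbdd : ∀ i, Bornology.IsBounded (D i))
    (hDcl : ∀ i, IsClosed (D i)) (hDcvx : ∀ i, Convex ℝ (D i))
    -- the operator: maps D into D and is α-quasi-averaged, with fixed point x* ∈ D
    (T : (∀ i, H i) → ∀ i, H i)
    (hTD : ∀ x : ∀ i, H i, (∀ i, x i ∈ D i) → ∀ i, T x i ∈ D i)
    (α : ℝ) (hα : α ∈ Set.Ioo (0 : ℝ) 1)
    (hT : ∀ x y : ∀ i, H i, (∀ i, x i ∈ D i) → T y = y → ∀ i,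
      ‖T x i - y i‖ ^ 2 ≤ ‖x i - y i‖ ^ 2 - ((1 - α) / α) * ‖x i - T x i‖ ^ 2)
    (xstar : ∀ i, H i) (hxstar : T xstar = xstar) (hxstarD : ∀ i, xstar i ∈ D i)
    -- the random update indicators: i.i.d., {0,1}-valued, with P(u_i = 1) = p_i > 0
    (u : ℕ → Ω → Fin n → ℝ) (humeas : ∀ ℓ, Measurable (u ℓ))
    (h01 : ∀ ℓ ω i, u ℓ ω i = 0 ∨ u ℓ ω i = 1)
    (p : Fin n → ℝ) (hp : ∀ i, 0 < p i)
    (hpP : ∀ ℓ i, μ {ω | u ℓ ω i = 1} = ENNReal.ofReal (p i))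
    (huindep : iIndepFun u μ)
    (huid : ∀ ℓ ℓ', IdentDistrib (u ℓ) (u ℓ') μ μ)
    -- the additive errors: integrable first and second moments of the norms
    (e : ℕ → Ω → ∀ i, H i) (hemeas : ∀ ℓ, Measurable (e ℓ))
    (m : ℕ → Fin n → ℝ)
    (heint : ∀ ℓ i, Integrable (fun ω => ‖e ℓ ω i‖) μ)
    (hm : ∀ ℓ i, ∫ ω, ‖e ℓ ω i‖ ∂μ = m ℓ i)
    (heint2 : ∀ ℓ i, Integrable (fun ω => ‖e ℓ ω i‖ ^ 2) μ)
    (hbdd : ∀ i, BddAbove (Set.range fun ℓ =>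
      (∫ ω, ‖e ℓ ω i‖ ^ 2 ∂μ) + 2 * Metric.diam (D i) * m ℓ i))
    -- the processes {u^ℓ} and {e^ℓ} are independent of each other
    (hue : IndepFun (fun ω => fun ℓ => u ℓ ω) (fun ω => fun ℓ => e ℓ ω) μ)
    -- the iteration, with deterministic initial condition x0 ∈ D,
    -- and iterates staying in D almost surely
    (x0 : ∀ i, H i) (hx0D : ∀ i, x0 i ∈ D i)
    (X : ℕ → Ω → ∀ i, H i)
    (hX0 : ∀ ω, X 0 ω = x0)
    (hXrec : ∀ ℓ ω i, X (ℓ + 1) ω i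
      = (1 - u ℓ ω i) • X ℓ ω i + u ℓ ω i • T (X ℓ ω) i + u ℓ ω i • e ℓ ω i)
    (hXD : ∀ ℓ, ∀ᵐ ω ∂μ, ∀ i, X ℓ ω i ∈ D i)
    (hFPRint : ∀ h i, Integrable (fun ω => ‖X h ω i - T (X h ω) i‖ ^ 2) μ)
    (ℓ : ℕ) (i : Fin n) :
    ∫ ω, (1 / ((ℓ : ℝ) + 1))
        * ∑ h ∈ Finset.range (ℓ + 1), u h ω i * ‖X h ω i - T (X h ω) i‖ ^ 2 ∂μ
      ≤ (α / (1 - α))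
        * ((1 / ((ℓ : ℝ) + 1)) * ‖x0 i - xstar i‖ ^ 2
          + p i * ⨆ ℓ' : ℕ,
              ((∫ ω, ‖e ℓ' ω i‖ ^ 2 ∂μ) + 2 * Metric.diam (D i) * m ℓ' i)) := by
  obtain ⟨hα0, hα1⟩ := hα
  set d : ℝ := Metric.diam (D i) with hd
  have hd0 : (0:ℝ) ≤ d := Metric.diam_nonneg
  set S : ℝ := ⨆ ℓ' : ℕ, ((∫ ω, ‖e ℓ' ω i‖ ^ 2 ∂μ) + 2 * d * m ℓ' i) with hSdef
  set c : ℝ := (1 - α) / α with hcdef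
  have hc0 : (0:ℝ) < c := div_pos (by linarith) hα0
  set N : ℝ := (ℓ : ℝ) + 1 with hNdef
  have hN0 : (0:ℝ) < N := by positivity
  have hcne : c ≠ 0 := ne_of_gt hc0
  have hNne : N ≠ 0 := ne_of_gt hN0
  have humeasi : ∀ h, Measurable fun ω => u h ω i :=
    fun h => (measurable_pi_apply i).comp (humeas h)
  -- integrability of the residual terms
  have hFint : ∀ h, Integrable (fun ω => u h ω i * ‖X h ω i - T (X h ω) i‖ ^ 2) μ := by
    intro h
    refine (hFPRint h i).bdd_mul (c := 1) (humeasi h).aestronglyMeasurable (Filter.Eventually.of_forall fun ω => ?_)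
    rcases h01 h ω i with h' | h' <;> simp [h']
  -- integrability of the error terms
  have hgint : ∀ h, Integrable (fun ω => ‖e h ω i‖ ^ 2 + 2 * d * ‖e h ω i‖) μ :=
    fun h => (heint2 h i).add ((heint h i).const_mul _)
  have hErrInt : ∀ h, Integrable
      (fun ω => u h ω i * (‖e h ω i‖ ^ 2 + 2 * d * ‖e h ω i‖)) μ := by
    intro h
    refine (hgint h).bdd_mul (c := 1) (humeasi h).aestronglyMeasurable (Filter.Eventually.of_forall fun ω => ?_)
    rcases h01 h ω i with h' | h' <;> simp [h']
  have huint : ∀ h, Integrable (fun ω => u h ω i) μ := by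
    intro h
    refine (integrable_const (1:ℝ)).mono' (humeasi h).aestronglyMeasurable
      (Filter.Eventually.of_forall fun ω => ?_)
    rcases h01 h ω i with h' | h' <;> simp [h']
  -- expectation of the indicator
  have hEu : ∀ h, ∫ ω, u h ω i ∂μ = p i := by
    intro h
    have hms : MeasurableSet {ω | u h ω i = 1} :=
      (humeasi h) (measurableSet_singleton 1)
    have heq : (fun ω => u h ω i) = Set.indicator {ω | u h ω i = 1} 1 := by
      funext ω
      rcases h01 h ω i with h' | h'
      · have hnot : ω ∉ {ω | u h ω i = 1} := by simp [Set.mem_setOf_eq, h']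
        simp [Set.indicator_of_notMem hnot, h']
      · have hmem : ω ∈ {ω | u h ω i = 1} := h'
        simp [Set.indicator_of_mem hmem, h']
    rw [heq, integral_indicator_one hms, measureReal_def, hpP h i, ENNReal.toReal_ofReal (hp i).le]
  -- independence of the indicator and the error magnitude
  have hUE : ∀ h, IndepFun (fun ω => u h ω i)
      (fun ω => ‖e h ω i‖ ^ 2 + 2 * d * ‖e h ω i‖) μ := by
    intro h
    have hφ : Measurable fun v : ℕ → Fin n → ℝ => v h i :=
      (measurable_pi_apply i).comp (measurable_pi_apply h)
    have hw : Measurable fun w : ℕ → ∀ j, H j => w h i :=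
      (measurable_pi_apply i).comp (measurable_pi_apply h)
    have hψ : Measurable fun w : ℕ → ∀ j, H j => ‖w h i‖ ^ 2 + 2 * d * ‖w h i‖ :=
      (hw.norm.pow_const 2).add (hw.norm.const_mul _)
    exact hue.comp hφ hψ
  -- expected value of the error term
  have hEErr : ∀ h, ∫ ω, u h ω i * (‖e h ω i‖ ^ 2 + 2 * d * ‖e h ω i‖) ∂μ
      = p i * ((∫ ω, ‖e h ω i‖ ^ 2 ∂μ) + 2 * d * m h i) := by
    intro h
    have hmul := (hUE h).integral_mul_eq_mul_integral (huint h).aestronglyMeasurable (hgint h).aestronglyMeasurable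
    have h2 : (fun ω => u h ω i * (‖e h ω i‖ ^ 2 + 2 * d * ‖e h ω i‖))
        = (fun ω => u h ω i) * (fun ω => ‖e h ω i‖ ^ 2 + 2 * d * ‖e h ω i‖) := rfl
    rw [h2, hmul, hEu h, integral_add (heint2 h i) ((heint h i).const_mul _),
      integral_const_mul, hm h i]
  have hErrLe : ∀ h, ∫ ω, u h ω i * (‖e h ω i‖ ^ 2 + 2 * d * ‖e h ω i‖) ∂μ
      ≤ p i * S := by
    intro h
    rw [hEErr h]
    exact mul_le_mul_of_nonneg_left (le_ciSup (hbdd i) h) (hp i).le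
  -- the one-step a.s. inequality
  have hstep : ∀ h : ℕ, ∀ᵐ ω ∂μ, c * (u h ω i * ‖X h ω i - T (X h ω) i‖ ^ 2)
      ≤ ‖X h ω i - xstar i‖ ^ 2 - ‖X (h+1) ω i - xstar i‖ ^ 2
        + u h ω i * (‖e h ω i‖ ^ 2 + 2 * d * ‖e h ω i‖) := by
    intro h
    filter_upwards [hXD h] with ω hD
    rcases h01 h ω i with h' | h'
    · have hx : X (h+1) ω i = X h ω i := by rw [hXrec]; rw [h']; simp
      rw [hx, h']
      simp
    · have hx : X (h+1) ω i = T (X h ω) i + e h ω i := by rw [hXrec, h']; simp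
      rw [hx, h']
      have hquasi := hT (X h ω) xstar hD hxstar i
      have hTd : ‖T (X h ω) i - xstar i‖ ≤ d := by
        rw [← dist_eq_norm]
        exact Metric.dist_le_diam_of_mem (hDbdd i) (hTD _ hD i) (hxstarD i)
      have hexp : ‖T (X h ω) i + e h ω i - xstar i‖ ^ 2
          = ‖T (X h ω) i - xstar i‖ ^ 2
            + 2 * (inner ℝ (T (X h ω) i - xstar i) (e h ω i) : ℝ) + ‖e h ω i‖ ^ 2 := by
        rw [show T (X h ω) i + e h ω i - xstar i
            = (T (X h ω) i - xstar i) + e h ω i by abel, norm_add_sq_real]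
      have hCS : (inner ℝ (T (X h ω) i - xstar i) (e h ω i) : ℝ)
          ≤ ‖T (X h ω) i - xstar i‖ * ‖e h ω i‖ := real_inner_le_norm _ _
      have hen : (0:ℝ) ≤ ‖e h ω i‖ := norm_nonneg _
      have hdd : ‖T (X h ω) i - xstar i‖ * ‖e h ω i‖ ≤ d * ‖e h ω i‖ :=
        mul_le_mul_of_nonneg_right hTd hen
      rw [hexp]
      linarith [hCS.trans hdd, hquasi]
  -- sum the inequalities and telescope
  have hsum : ∀ᵐ ω ∂μ,
      ∑ h ∈ Finset.range (ℓ + 1), c * (u h ω i * ‖X h ω i - T (X h ω) i‖ ^ 2)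
        ≤ ‖x0 i - xstar i‖ ^ 2
          + ∑ h ∈ Finset.range (ℓ + 1),
              u h ω i * (‖e h ω i‖ ^ 2 + 2 * d * ‖e h ω i‖) := by
    filter_upwards [ae_all_iff.2 hstep] with ω hω
    have h1 : ∑ h ∈ Finset.range (ℓ + 1), c * (u h ω i * ‖X h ω i - T (X h ω) i‖ ^ 2)
        ≤ ∑ h ∈ Finset.range (ℓ + 1),
            (‖X h ω i - xstar i‖ ^ 2 - ‖X (h+1) ω i - xstar i‖ ^ 2
              + u h ω i * (‖e h ω i‖ ^ 2 + 2 * d * ‖e h ω i‖)) :=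
      Finset.sum_le_sum fun h _ => hω h
    rw [Finset.sum_add_distrib,
      Finset.sum_range_sub' (fun h => ‖X h ω i - xstar i‖ ^ 2)] at h1
    have h0 : ‖X 0 ω i - xstar i‖ ^ 2 = ‖x0 i - xstar i‖ ^ 2 := by rw [hX0]
    have hnn : (0:ℝ) ≤ ‖X (ℓ+1) ω i - xstar i‖ ^ 2 := sq_nonneg _
    linarith
  -- integrate
  have hintL : ∀ h ∈ Finset.range (ℓ+1),
      Integrable (fun ω => c * (u h ω i * ‖X h ω i - T (X h ω) i‖ ^ 2)) μ :=
    fun h _ => (hFint h).const_mul c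
  have hintE : ∀ h ∈ Finset.range (ℓ+1),
      Integrable (fun ω => u h ω i * (‖e h ω i‖ ^ 2 + 2 * d * ‖e h ω i‖)) μ :=
    fun h _ => hErrInt h
  have hRint : Integrable (fun ω => ‖x0 i - xstar i‖ ^ 2
      + ∑ h ∈ Finset.range (ℓ + 1), u h ω i * (‖e h ω i‖ ^ 2 + 2 * d * ‖e h ω i‖)) μ := by
    exact (integrable_const _).add (integrable_finset_sum _ hintE)
  have hmono := integral_mono_ae (integrable_finset_sum _ hintL) hRint hsum
  rw [integral_finset_sum _ hintL,
    integral_add (integrable_const _) (integrable_finset_sum _ hintE),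
    integral_const, integral_finset_sum _ hintE] at hmono
  simp only [probReal_univ, measure_univ, ENNReal.toReal_one, smul_eq_mul, one_mul] at hmono
  simp_rw [integral_const_mul] at hmono
  rw [← Finset.mul_sum] at hmono
  have hsum2 : ∑ h ∈ Finset.range (ℓ+1),
      ∫ ω, u h ω i * (‖e h ω i‖ ^ 2 + 2 * d * ‖e h ω i‖) ∂μ ≤ N * (p i * S) := by
    calc ∑ h ∈ Finset.range (ℓ+1),
        ∫ ω, u h ω i * (‖e h ω i‖ ^ 2 + 2 * d * ‖e h ω i‖) ∂μ
        ≤ ∑ _h ∈ Finset.range (ℓ+1), p i * S :=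
          Finset.sum_le_sum fun h _ => hErrLe h
      _ = N * (p i * S) := by
          rw [Finset.sum_const, Finset.card_range, nsmul_eq_mul, hNdef]
          push_cast
          ring
  have hA : c * ∑ h ∈ Finset.range (ℓ+1),
      ∫ ω, u h ω i * ‖X h ω i - T (X h ω) i‖ ^ 2 ∂μ
      ≤ ‖x0 i - xstar i‖ ^ 2 + N * (p i * S) := by linarith
  -- rewrite the left-hand side of the goal
  have hgoalL : ∫ ω, (1 / N)
      * ∑ h ∈ Finset.range (ℓ + 1), u h ω i * ‖X h ω i - T (X h ω) i‖ ^ 2 ∂μ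
      = (1 / N) * ∑ h ∈ Finset.range (ℓ+1),
          ∫ ω, u h ω i * ‖X h ω i - T (X h ω) i‖ ^ 2 ∂μ := by
    rw [integral_const_mul, integral_finset_sum _ fun h _ => hFint h]
  rw [hgoalL]
  have hαc : α / (1 - α) = 1 / c := by rw [hcdef, one_div_div]
  rw [hαc]
  set A := ∑ h ∈ Finset.range (ℓ+1),
      ∫ ω, u h ω i * ‖X h ω i - T (X h ω) i‖ ^ 2 ∂μ with hAdef
  set K := ‖x0 i - xstar i‖ ^ 2 with hKdef
  have key : (1/c) * ((1/N) * K + p i * S) = (1/(c*N)) * (K + N * (p i * S)) := by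
    field_simp
  have key2 : (1/N) * A = (1/(c*N)) * (c * A) := by
    field_simp
  rw [key, key2]
  exact mul_le_mul_of_nonneg_left hA (by positivity)
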